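/- For fixed a > 0 and b ∈ ℝ, set k = exp(b/a) and Λ(r) = 1 + a ln ln(1/r)/ln(1/r) + b/ln(1/r) for small r > 0. Then for x > 0 small, the solution r of Λ(r) - 1 = x is given by r = (x/(ak))^{a/x} (−W_m(−x/(ak)))^{−a/x}, where W_m is the lower real branch of the Lambert W function on (−1/e, 0). -/

import Mathlib

open Real Set

/-- For `Λ(r) = 1 + a ln ln(1/r)/ln(1/r) + b/ln(1/r)` and small `x > 0`, the solution of
`Λ(r) - 1 = x` is `r = (x/(ak))^{a/x} (−W_m(−x/(ak)))^{−a/x}` with `k = e^{b/a}`, where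
`W_m` is the lower real branch of the Lambert `W` function. -/
theorem stmt_14 (Wm : ℝ → ℝ)
    (hWm : ∀ y ∈ Ioo (-(Real.exp 1)⁻¹) (0:ℝ),
      Wm y ≤ -1 ∧ Wm y * Real.exp (Wm y) = y)
    (a b : ℝ) (ha : 0 < a) :
    ∃ x₁ > (0:ℝ), ∀ x ∈ Ioo (0:ℝ) x₁,
      letI k : ℝ := Real.exp (b / a)
      letI r : ℝ := (x / (a * k)) ^ (a / x) * (-(Wm (-(x / (a * k))))) ^ (-(a / x))
      0 < r ∧ r < 1 ∧
        a * Real.log (Real.log (1 / r)) / Real.log (1 / r) + b / Real.log (1 / r) = x := by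
  have hk0 : (0:ℝ) < Real.exp (b / a) := Real.exp_pos _
  refine ⟨a * Real.exp (b / a) / Real.exp 1, by positivity, ?_⟩
  intro x hx
  set k : ℝ := Real.exp (b / a) with hk
  obtain ⟨hx0, hxu⟩ := hx
  have hak : (0:ℝ) < a * k := by positivity
  have he1 : (0:ℝ) < Real.exp 1 := Real.exp_pos _
  have hy : -(x / (a * k)) ∈ Ioo (-(Real.exp 1)⁻¹) (0:ℝ) := by
    constructor
    · have h1 : x / (a * k) < (Real.exp 1)⁻¹ := by
        rw [div_lt_iff₀ hak, inv_mul_eq_div, lt_div_iff₀ he1]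
        exact (lt_div_iff₀ he1).mp hxu
      linarith
    · have : 0 < x / (a * k) := by positivity
      linarith
  obtain ⟨hw1, hw2⟩ := hWm _ hy
  set w : ℝ := Wm (-(x / (a * k))) with hwdef
  have hw0 : w < 0 := lt_of_le_of_lt hw1 (by norm_num)
  have hew : (0:ℝ) < Real.exp w := Real.exp_pos _
  have hxak : x / (a * k) = (-w) * Real.exp w := by nlinarith [hw2]
  have hxeq : x = a * k * ((-w) * Real.exp w) := by rw [mul_comm]; exact (div_eq_iff hak.ne').mp hxak
  have hax : 0 < a / x := by positivity
  have hr : (x / (a * k)) ^ (a / x) * (-w) ^ (-(a / x)) = Real.exp (w * (a / x)) := by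
    rw [hxak, Real.mul_rpow (by linarith) hew.le, Real.rpow_neg (by linarith),
      mul_comm ((-w) ^ (a / x)) _, mul_assoc,
      mul_inv_cancel₀ (ne_of_gt (Real.rpow_pos_of_pos (by linarith) _)), mul_one,
      ← Real.exp_mul]
  rw [hr]
  refine ⟨Real.exp_pos _, Real.exp_lt_one_iff.mpr (by nlinarith), ?_⟩
  rw [one_div, ← Real.exp_neg, Real.log_exp]
  have hE : -(w * (a / x)) = Real.exp (-(b / a) - w) := by
    rw [Real.exp_sub, Real.exp_neg, ← hk, hxeq]
    field_simp [hw0.ne, ha.ne', hk0.ne', hew.ne']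
  rw [hE, Real.log_exp, ← hE]
  have hE0 : 0 < -(w * (a / x)) := by nlinarith
  rw [← add_div, div_eq_iff hE0.ne']
  field_simp
  ring
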